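/- For all n ≥ 1, the dot product z_M(n) · W(b_n) equals ℓ_{n-1}·Q_n + t_n·Q_{n+1} - 1, where W(b_n) is the normalized weight sequence of b_n = Q_{n+1}/Q_n, and z_M(n) is the vector obtained from 6·W(ℓ_n/ℓ_{n-1}) by appending seven entries equal to 1. -/

import Mathlib

/-- The normalized weight sequence of `p/q`, defined by the subtractive
Euclidean recursion `W(p,q) = q^{×⌊p/q⌋} ++ W(q, p mod q)`, `W(p,0) = []`. -/
def weightSeq : ℕ → ℕ → List ℕ
  | _, 0 => []
  | p, (q + 1) => List.replicate (p / (q + 1)) (q + 1) ++ weightSeq (q + 1) (p % (q + 1))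
termination_by p q => q
decreasing_by exact Nat.lt_of_lt_of_le (Nat.mod_lt _ (Nat.succ_pos q)) (le_refl _)

/-- `Q_0 = 1, Q_1 = 8, Q_{n+2} = 7Q_{n+1} - Q_n`. -/
def Qseq : ℕ → ℕ
  | 0 => 1
  | 1 => 8
  | (n + 2) => 7 * Qseq (n + 1) - Qseq n

/-- `ℓ_0 = 1, ℓ_1 = 7, ℓ_{n+2} = 7ℓ_{n+1} - ℓ_n`. -/
def ellSeq : ℕ → ℕ
  | 0 => 1
  | 1 => 7
  | (n + 2) => 7 * ellSeq (n + 1) - ellSeq n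

/-- `z_M(n)`: the vector `6·W(ℓ_n/ℓ_{n-1})` with seven `1`s appended. -/
def zM (n : ℕ) : List ℕ :=
  ((weightSeq (ellSeq n) (ellSeq (n - 1))).map (fun x => 6 * x)) ++ List.replicate 7 1

lemma weightSeq_step (a q r : ℕ) (hq : 0 < q) (hr : r < q) :
    weightSeq (a * q + r) q = List.replicate a q ++ weightSeq q r := by
  obtain ⟨q', rfl⟩ : ∃ q', q = q' + 1 := ⟨q - 1, by omega⟩
  have e : a * (q' + 1) + r = r + (q' + 1) * a := by ring
  rw [e, weightSeq, Nat.add_mul_div_left _ _ (Nat.succ_pos q'),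
    Nat.add_mul_mod_self_left, Nat.div_eq_of_lt hr, Nat.mod_eq_of_lt hr, Nat.zero_add]

lemma Qfacts : ∀ n, 0 < Qseq n ∧ 2 * Qseq n < Qseq (n+1) ∧ Qseq (n+2) + Qseq n = 7 * Qseq (n+1) := by
  intro n
  induction n with
  | zero => norm_num [Qseq]
  | succ m ih =>
    have e : Qseq (m+3) = 7 * Qseq (m+2) - Qseq (m+1) := by rw [Qseq]
    simp only [show m+1+1 = m+2 from rfl, show m+1+2 = m+3 from rfl]
    omega

lemma ellfacts : ∀ n, 0 < ellSeq n ∧ 2 * ellSeq n < ellSeq (n+1) ∧ ellSeq (n+2) + ellSeq n = 7 * ellSeq (n+1) := by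
  intro n
  induction n with
  | zero => norm_num [ellSeq]
  | succ m ih =>
    have e : ellSeq (m+3) = 7 * ellSeq (m+2) - ellSeq (m+1) := by rw [ellSeq]
    simp only [show m+1+1 = m+2 from rfl, show m+1+2 = m+3 from rfl]
    omega

def Aw (n : ℕ) : List ℕ := weightSeq (Qseq (n+1)) (Qseq (n+1) - Qseq n)
def Bw (n : ℕ) : List ℕ := weightSeq (ellSeq (n+1)) (ellSeq (n+1) - ellSeq n)

lemma WQ_unfold (n : ℕ) : weightSeq (Qseq (n+2)) (Qseq (n+1)) =
    List.replicate 6 (Qseq (n+1)) ++ Aw n := by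
  obtain ⟨h0, h1, h2⟩ := Qfacts n
  have h0' := (Qfacts (n+1)).1
  have e : Qseq (n+2) = 6 * Qseq (n+1) + (Qseq (n+1) - Qseq n) := by omega
  rw [e, weightSeq_step 6 _ _ (by omega) (by omega)]
  rfl

lemma Aw_succ (n : ℕ) : Aw (n+1) =
    (Qseq (n+2) - Qseq (n+1)) :: (List.replicate 5 (Qseq (n+1)) ++ Aw n) := by
  obtain ⟨h0, h1, h2⟩ := Qfacts n
  obtain ⟨h0', h1', h2'⟩ := Qfacts (n+1)
  unfold Aw
  simp only [show n+1+1 = n+2 from rfl]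
  set d := Qseq (n+2) - Qseq (n+1) with hd
  have e1 : Qseq (n+2) = 1 * d + Qseq (n+1) := by omega
  rw [e1, weightSeq_step 1 d _ (by omega) (by omega)]
  have e2 : d = 5 * Qseq (n+1) + (Qseq (n+1) - Qseq n) := by omega
  rw [e2, weightSeq_step 5 _ _ (by omega) (by omega)]
  simp [← e2]

lemma Wl_unfold (n : ℕ) : weightSeq (ellSeq (n+2)) (ellSeq (n+1)) =
    List.replicate 6 (ellSeq (n+1)) ++ Bw n := by
  obtain ⟨h0, h1, h2⟩ := ellfacts n
  have h0' := (ellfacts (n+1)).1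
  have e : ellSeq (n+2) = 6 * ellSeq (n+1) + (ellSeq (n+1) - ellSeq n) := by omega
  rw [e, weightSeq_step 6 _ _ (by omega) (by omega)]
  rfl

lemma Bw_succ (n : ℕ) : Bw (n+1) =
    (ellSeq (n+2) - ellSeq (n+1)) :: (List.replicate 5 (ellSeq (n+1)) ++ Bw n) := by
  obtain ⟨h0, h1, h2⟩ := ellfacts n
  obtain ⟨h0', h1', h2'⟩ := ellfacts (n+1)
  unfold Bw
  simp only [show n+1+1 = n+2 from rfl]
  set d := ellSeq (n+2) - ellSeq (n+1) with hd
  have e1 : ellSeq (n+2) = 1 * d + ellSeq (n+1) := by omega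
  rw [e1, weightSeq_step 1 d _ (by omega) (by omega)]
  have e2 : d = 5 * ellSeq (n+1) + (ellSeq (n+1) - ellSeq n) := by omega
  rw [e2, weightSeq_step 5 _ _ (by omega) (by omega)]
  simp [← e2]

lemma Aw0 : Aw 0 = [7,1,1,1,1,1,1,1] := by
  show weightSeq (Qseq 1) (Qseq 1 - Qseq 0) = _
  norm_num [Qseq]
  simp [weightSeq]

lemma Bw0 : Bw 0 = [6,1,1,1,1,1,1] := by
  show weightSeq (ellSeq 1) (ellSeq 1 - ellSeq 0) = _
  norm_num [ellSeq]
  simp [weightSeq]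

def Tw (n : ℕ) : ℕ :=
  (List.zipWith (· * ·) ((Bw n).map (fun x => 6 * x) ++ List.replicate 7 1) (Aw (n+1))).sum

lemma Tw_succ (n : ℕ) : Tw (n+1) =
    6 * (ellSeq (n+2) - ellSeq (n+1)) * (Qseq (n+3) - Qseq (n+2)) +
      5 * (6 * ellSeq (n+1) * Qseq (n+2)) + Tw n := by
  unfold Tw
  rw [Bw_succ n, Aw_succ (n+1)]
  simp only [show n+1+1 = n+2 from rfl, show n+1+2 = n+3 from rfl, List.map_cons,
    List.map_append, List.map_replicate, List.cons_append, List.zipWith_cons_cons,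
    List.append_assoc]
  rw [List.zipWith_append (by simp), List.sum_cons, List.sum_append,
    List.zipWith_replicate]
  simp [List.sum_replicate, mul_assoc]
  ring

lemma Aw1 : Aw 1 = [47,8,8,8,8,8,7,1,1,1,1,1,1,1] := by
  rw [Aw_succ 0, Aw0]
  norm_num [Qseq]
  rfl

lemma Tw0 : Tw 0 = 1981 := by
  unfold Tw
  rw [Bw0, Aw1]
  rfl

lemma Tw_closed (n : ℕ) : (Tw n : ℤ) =
    ((ellSeq (n+2) : ℤ) - (ellSeq (n+1) : ℤ)) * (Qseq (n+3) : ℤ)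
      - 35 * (ellSeq (n+1) : ℤ) * (Qseq (n+2) : ℤ) - 1 := by
  induction n with
  | zero =>
    rw [Tw0]
    norm_num [Qseq, ellSeq]
  | succ m ih =>
    have hl1 := (ellfacts (m+1)).2.1
    have hl2 := (ellfacts (m+1)).2.2
    have hq1 := (Qfacts (m+2)).2.1
    have hq2 := (Qfacts (m+2)).2.2
    simp only [show m+1+1 = m+2 from rfl, show m+1+2 = m+3 from rfl,
      show m+2+1 = m+3 from rfl, show m+2+2 = m+4 from rfl] at hl1 hl2 hq1 hq2 ⊢
    have c1 : ((ellSeq (m+2) - ellSeq (m+1) : ℕ) : ℤ) = (ellSeq (m+2) : ℤ) - ellSeq (m+1) := by omega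
    have c2 : ((Qseq (m+3) - Qseq (m+2) : ℕ) : ℤ) = (Qseq (m+3) : ℤ) - Qseq (m+2) := by omega
    have r1 : (ellSeq (m+3) : ℤ) = 7 * ellSeq (m+2) - ellSeq (m+1) := by omega
    have r2 : (Qseq (m+4) : ℤ) = 7 * Qseq (m+3) - Qseq (m+2) := by omega
    rw [Tw_succ m]
    push_cast [c1, c2]
    rw [r1, r2, ih]
    ring

theorem zM_dot_weight (n : ℕ) (hn : 1 ≤ n) :
    ((List.zipWith (· * ·) (zM n) (weightSeq (Qseq (n + 1)) (Qseq n))).sum : ℤ) =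
      (ellSeq (n - 1) : ℤ) * (Qseq n : ℤ) +
        ((ellSeq n : ℤ) - (ellSeq (n - 1) : ℤ)) * (Qseq (n + 1) : ℤ) - 1 := by
  match n, hn with
  | 1, _ =>
    have h1 : weightSeq (Qseq 2) (Qseq 1) = [8,8,8,8,8,8,7,1,1,1,1,1,1,1] := by
      rw [WQ_unfold 0, Aw0]; rfl
    have h2 : zM 1 = [6,6,6,6,6,6,6,1,1,1,1,1,1,1] := by
      show (weightSeq (ellSeq 1) (ellSeq 0)).map _ ++ _ = _
      norm_num [ellSeq]
      simp [weightSeq]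
    rw [h1, h2]
    norm_num [Qseq, ellSeq]
  | (m+2), _ =>
    have hzM : zM (m+2) =
        (List.replicate 6 (ellSeq (m+1))).map (fun x => 6*x) ++
          ((Bw m).map (fun x => 6*x) ++ List.replicate 7 1) := by
      show (weightSeq (ellSeq (m+2)) (ellSeq (m+2-1))).map _ ++ _ = _
      rw [show m+2-1 = m+1 from rfl, Wl_unfold m, List.map_append, List.append_assoc]
    rw [hzM, show m+2+1 = m+3 from rfl, WQ_unfold (m+1),
      show m+1+1 = m+2 from rfl,
      List.zipWith_append (by simp), List.sum_append]
    have hT : (List.zipWith (· * ·) ((Bw m).map (fun x => 6*x) ++ List.replicate 7 1)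
        (Aw (m+1))).sum = Tw m := rfl
    rw [hT]
    have : ((List.zipWith (· * ·) ((List.replicate 6 (ellSeq (m+1))).map (fun x => 6*x))
        (List.replicate 6 (Qseq (m+2)))).sum : ℕ)
        = 6 * (6 * ellSeq (m+1) * Qseq (m+2)) := by
      simp [List.map_replicate, List.zipWith_replicate, List.sum_replicate, mul_assoc]
      ring
    rw [this]
    push_cast
    rw [Tw_closed m]
    ring
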